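/- Let U : [−1,1] → ℝ be continuous on [−1,1] and twice continuously differentiable on (−1,1), and let u, p be the associated axisymmetric no-swirl velocity field and pressure, with associated stress tensor T_{ij}. Then for every ε > 0, R > 0, every continuous function ψ : ℝ → ℝ, and each j ∈ {1,2}, the surface integral of T_{ij} ν_i ψ(x₃) over the cylinder {|x'| = ε, −R < x₃ < R} vanishes: ∫_{−R}^{R} ∫_{0}^{2π} ( Σ_{i=1}^{3} T_{ij}(ε cos ϑ, ε sin ϑ, z) ν_i(ϑ) ) ψ(z) ε dϑ dz = 0, where ν(ϑ) := (cos ϑ, sin ϑ, 0) is the outward unit normal of the cylinder. -/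

import Mathlib

open Set intervalIntegral

/-- The Euclidean norm of `x' = (x₁, x₂)`, the first two coordinates of `x ∈ ℝ³`. -/
noncomputable def primeNorm3 (x : EuclideanSpace ℝ (Fin 3)) : ℝ :=
  Real.sqrt (x 0 ^ 2 + x 1 ^ 2)

/-- The axisymmetric no-swirl velocity field associated with the profile `U`. -/
noncomputable def velField (U : ℝ → ℝ) (x : EuclideanSpace ℝ (Fin 3)) :
    EuclideanSpace ℝ (Fin 3) :=
  WithLp.toLp 2 fun (i : Fin 3) =>
    if i = 0 then
      x 0 * deriv U (x 2 / ‖x‖) / ‖x‖ ^ 2 + x 0 * x 2 * U (x 2 / ‖x‖) / (‖x‖ * primeNorm3 x ^ 2)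
    else if i = 1 then
      x 1 * deriv U (x 2 / ‖x‖) / ‖x‖ ^ 2 + x 1 * x 2 * U (x 2 / ‖x‖) / (‖x‖ * primeNorm3 x ^ 2)
    else
      x 2 * deriv U (x 2 / ‖x‖) / ‖x‖ ^ 2 - U (x 2 / ‖x‖) / ‖x‖

/-- The pressure associated with the profile `U`. -/
noncomputable def pressure (U : ℝ → ℝ) (x : EuclideanSpace ℝ (Fin 3)) : ℝ :=
  deriv U (x 2 / ‖x‖) / ‖x‖ ^ 2 - (U (x 2 / ‖x‖)) ^ 2 / (2 * primeNorm3 x ^ 2)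

/-- The stress tensor `T_{ij} = p δ_{ij} + u_i u_j - ∂_{x_j} u_i - ∂_{x_i} u_j`. -/
noncomputable def stressT (U : ℝ → ℝ) (i j : Fin 3) (x : EuclideanSpace ℝ (Fin 3)) : ℝ :=
  pressure U x * (if i = j then 1 else 0) + velField U x i * velField U x j
    - fderiv ℝ (fun z => velField U z i) x (EuclideanSpace.single j 1)
    - fderiv ℝ (fun z => velField U z j) x (EuclideanSpace.single i 1)

/-- The point of the cylinder `{|x'| = ε}` with angle `ϑ` and height `z`. -/
noncomputable def cylPt (ε ϑ z : ℝ) : EuclideanSpace ℝ (Fin 3) :=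
  WithLp.toLp 2 fun (i : Fin 3) => if i = 0 then ε * Real.cos ϑ else if i = 1 then ε * Real.sin ϑ else z

/- auxiliary: reflection of the first two coordinates -/
noncomputable def sigmaLIE : EuclideanSpace ℝ (Fin 3) ≃ₗᵢ[ℝ] EuclideanSpace ℝ (Fin 3) where
  toFun x := WithLp.toLp 2 fun i => if i = 2 then x i else -x i
  invFun x := WithLp.toLp 2 fun i => if i = 2 then x i else -x i
  map_add' x y := PiLp.ext fun i => by by_cases h : i = 2 <;> simp [h, PiLp.add_apply] <;> ring
  map_smul' c x := PiLp.ext fun i => by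
    by_cases h : i = 2 <;> simp [h, PiLp.smul_apply, smul_eq_mul, mul_neg]
  left_inv x := PiLp.ext fun i => by by_cases h : i = 2 <;> simp [h]
  right_inv x := PiLp.ext fun i => by by_cases h : i = 2 <;> simp [h]
  norm_map' x := by
    simp only [EuclideanSpace.norm_eq, LinearEquiv.coe_mk]
    congr 1
    rw [Fin.sum_univ_three, Fin.sum_univ_three]
    norm_num

noncomputable def sgn3 : Fin 3 → ℝ := fun i => if i = 2 then 1 else -1

lemma sigma_apply (x : EuclideanSpace ℝ (Fin 3)) (i : Fin 3) :
    sigmaLIE x i = if i = 2 then x i else -x i := rfl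

lemma sigma_norm (x : EuclideanSpace ℝ (Fin 3)) : ‖sigmaLIE x‖ = ‖x‖ := sigmaLIE.norm_map x

lemma prime_sigma (x : EuclideanSpace ℝ (Fin 3)) : primeNorm3 (sigmaLIE x) = primeNorm3 x := by
  simp [primeNorm3, sigma_apply]

lemma vel_sigma (U : ℝ → ℝ) (x : EuclideanSpace ℝ (Fin 3)) (i : Fin 3) :
    velField U (sigmaLIE x) i = sgn3 i * velField U x i := by
  fin_cases i <;>
    simp [velField, sgn3, sigma_apply, sigma_norm, prime_sigma] <;> ring

lemma pressure_sigma (U : ℝ → ℝ) (x : EuclideanSpace ℝ (Fin 3)) :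
    pressure U (sigmaLIE x) = pressure U x := by
  simp [pressure, sigma_apply, sigma_norm, prime_sigma]

lemma sigma_single (j : Fin 3) :
    sigmaLIE (EuclideanSpace.single j (1:ℝ)) = sgn3 j • EuclideanSpace.single j (1:ℝ) := by
  ext i
  rw [sigma_apply]
  fin_cases i <;> fin_cases j <;>
    simp [sgn3, EuclideanSpace.single_apply, PiLp.smul_apply, smul_eq_mul]

lemma fderiv_vel_sigma (U : ℝ → ℝ) (i j : Fin 3) (x : EuclideanSpace ℝ (Fin 3)) :
    fderiv ℝ (fun z => velField U z i) (sigmaLIE x) (EuclideanSpace.single j 1)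
      = sgn3 i * sgn3 j * fderiv ℝ (fun z => velField U z i) x (EuclideanSpace.single j 1) := by
  set f : EuclideanSpace ℝ (Fin 3) → ℝ := fun z => velField U z i with hf
  have hcomp : f ∘ (sigmaLIE.toContinuousLinearEquiv : EuclideanSpace ℝ (Fin 3) ≃L[ℝ]
      EuclideanSpace ℝ (Fin 3)) = fun z => sgn3 i * f z := by
    funext z
    simpa [hf, Function.comp] using vel_sigma U z i
  have h1 := (sigmaLIE.toContinuousLinearEquiv).comp_right_fderiv (f := f) (x := x)
  rw [hcomp] at h1
  have h2 : fderiv ℝ (fun z => sgn3 i * f z) x = sgn3 i • fderiv ℝ f x := by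
    by_cases hi : i = 2
    · simp [sgn3, hi]
    · have : (fun z => sgn3 i * f z) = fun z => -f z := by
        funext z; simp [sgn3, hi]
      rw [this, fderiv_fun_neg]
      simp [sgn3, hi]
    -- end
  rw [h2] at h1
  have h3 := congrArg (fun (L : EuclideanSpace ℝ (Fin 3) →L[ℝ] ℝ) =>
      L (EuclideanSpace.single j 1)) h1
  simp only [ContinuousLinearMap.smul_apply, ContinuousLinearMap.coe_comp',
    Function.comp_apply, ContinuousLinearEquiv.coe_coe] at h3
  have h4 : (sigmaLIE.toContinuousLinearEquiv : EuclideanSpace ℝ (Fin 3) →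
      EuclideanSpace ℝ (Fin 3)) (EuclideanSpace.single j (1:ℝ))
      = sgn3 j • EuclideanSpace.single j (1:ℝ) := by
    simpa using sigma_single j
  rw [h4, map_smul] at h3
  have hsj : sgn3 j * sgn3 j = 1 := by unfold sgn3; split <;> norm_num
  have hco : sigmaLIE.toContinuousLinearEquiv x = sigmaLIE x := rfl
  rw [hco] at h3
  simp only [smul_eq_mul] at h3
  -- h3 : sgn3 i * fderiv f x e = sgn3 j * fderiv f (σ x) e
  have : sgn3 j * (sgn3 i * (fderiv ℝ f x) (EuclideanSpace.single j 1))
      = sgn3 j * (sgn3 j * (fderiv ℝ f (sigmaLIE x)) (EuclideanSpace.single j 1)) := by rw [h3]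
  rw [← mul_assoc, ← mul_assoc, hsj, one_mul] at this
  rw [← this]; ring

lemma stress_sigma (U : ℝ → ℝ) (i j : Fin 3) (x : EuclideanSpace ℝ (Fin 3)) :
    stressT U i j (sigmaLIE x) = sgn3 i * sgn3 j * stressT U i j x := by
  unfold stressT
  rw [pressure_sigma, vel_sigma U x i, vel_sigma U x j, fderiv_vel_sigma, fderiv_vel_sigma]
  by_cases h : i = j
  · subst h
    have hsi : sgn3 i * sgn3 i = 1 := by unfold sgn3; split <;> norm_num
    simp only [if_pos rfl, if_true]
    linear_combination (-pressure U x) * hsi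
  · simp only [if_neg h]
    ring

lemma cyl_shift (ε ϑ z : ℝ) : cylPt ε (ϑ + Real.pi) z = sigmaLIE (cylPt ε ϑ z) := by
  ext i
  rw [sigma_apply]
  fin_cases i <;> simp [cylPt, Real.cos_add_pi, Real.sin_add_pi]

lemma integral_zero_of_antiperiodic (h : ℝ → ℝ) (hh : ∀ ϑ, h (ϑ + Real.pi) = -h ϑ) :
    ∫ ϑ in (0:ℝ)..(2*Real.pi), h ϑ = 0 := by
  by_cases hI : IntervalIntegrable h MeasureTheory.volume 0 Real.pi
  · have hI' : IntervalIntegrable (fun ϑ => h (ϑ + Real.pi)) MeasureTheory.volume 0 Real.pi := by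
      have := hI.neg
      simp only [hh]; exact this
    have hI2 : IntervalIntegrable h MeasureTheory.volume Real.pi (2*Real.pi) := by
      have h2 := hI'.comp_sub_right Real.pi
      simp only [sub_add_cancel] at h2
      have : Real.pi + Real.pi = 2 * Real.pi := by ring
      simpa [zero_add, this] using h2
    have hsplit := integral_add_adjacent_intervals (μ := MeasureTheory.volume)
      (a := (0:ℝ)) (b := Real.pi) (c := 2*Real.pi) hI hI2
    have hshift : (∫ ϑ in Real.pi..(2*Real.pi), h ϑ) = ∫ ϑ in (0:ℝ)..Real.pi, h (ϑ + Real.pi) := by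
      rw [integral_comp_add_right]
      norm_num [two_mul]
    have hneg : (∫ ϑ in (0:ℝ)..Real.pi, h (ϑ + Real.pi)) = -∫ ϑ in (0:ℝ)..Real.pi, h ϑ := by
      simp [hh, intervalIntegral.integral_neg]
    rw [← hsplit, hshift, hneg]
    ring
  · have hnot : ¬ IntervalIntegrable h MeasureTheory.volume 0 (2*Real.pi) := by
      intro hc
      exact hI (hc.mono_set (uIcc_subset_uIcc (by simp)
        (by rw [uIcc_of_le (by positivity)]; constructor <;> [exact Real.pi_pos.le;
          nlinarith [Real.pi_pos]])))
    rw [intervalIntegral.integral_undef hnot]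

/-- For `j ∈ {1,2}`, the surface integral of `T_{ij} ν_i ψ(x₃)` over the lateral
boundary of the cylinder `{|x'| = ε, -R < x₃ < R}` vanishes (Lemma 3.2). -/
theorem stmt16 (U : ℝ → ℝ)
    (hUc : ContinuousOn U (Icc (-1) 1)) (hU2 : ContDiffOn ℝ 2 U (Ioo (-1) 1))
    (ε R : ℝ) (hε : 0 < ε) (hR : 0 < R) (ψ : ℝ → ℝ) (hψ : Continuous ψ)
    (j : Fin 3) (hj : j = 0 ∨ j = 1) :
    (∫ z in (-R)..R, ∫ ϑ in (0 : ℝ)..(2 * Real.pi),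
      (∑ i : Fin 3, stressT U i j (cylPt ε ϑ z)
          * (if i = 0 then Real.cos ϑ else if i = 1 then Real.sin ϑ else 0))
        * ψ z * ε) = 0 := by
  have hinner : ∀ z : ℝ, (∫ ϑ in (0 : ℝ)..(2 * Real.pi),
      (∑ i : Fin 3, stressT U i j (cylPt ε ϑ z)
          * (if i = 0 then Real.cos ϑ else if i = 1 then Real.sin ϑ else 0))
        * ψ z * ε) = 0 := by
    intro z
    apply integral_zero_of_antiperiodic
    intro ϑ
    rw [cyl_shift]
    rw [Fin.sum_univ_three, Fin.sum_univ_three]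
    rw [stress_sigma, stress_sigma, stress_sigma]
    obtain hj0 | hj1 := hj <;> subst_vars <;>
      norm_num [sgn3, Real.cos_add_pi, Real.sin_add_pi, Fin.ext_iff] <;> ring
  rw [intervalIntegral.integral_congr (g := fun _ => (0:ℝ)) (fun z _ => hinner z)]
  simp
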